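/- Assume a < b, x_c = 0, y_c = 0 and 2r ≤ a². Then the following are equivalent: (1) 𝒮 and 𝒫 have a common point at which they are not tangent; (2) z_c² < r²; (3) the characteristic polynomial f has a non-real complex root (and then the two non-real roots are complex conjugates of each other). -/

import Mathlib

open Matrix Polynomial

/-- The 4×4 matrix of the elliptic paraboloid x²/a² + y²/b² - z = 0. -/
noncomputable def Pmat (a b : ℝ) : Matrix (Fin 4) (Fin 4) ℝ :=
  !![1/a^2, 0, 0, 0;
     0, 1/b^2, 0, 0;
     0, 0, 0, -(1/2 : ℝ);
     0, 0, -(1/2 : ℝ), 0]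

/-- The 4×4 matrix of the sphere (x-x_c)² + (y-y_c)² + (z-z_c)² = r². -/
noncomputable def Smat (xc yc zc r : ℝ) : Matrix (Fin 4) (Fin 4) ℝ :=
  !![1, 0, 0, -xc;
     0, 1, 0, -yc;
     0, 0, 1, -zc;
     -xc, -yc, -zc, xc^2 + yc^2 + zc^2 - r^2]

/-- The characteristic polynomial f(λ) = det(λP + S), as a real polynomial in λ. -/
noncomputable def charPoly (a b xc yc zc r : ℝ) : Polynomial ℝ :=
  Matrix.det ((X : Polynomial ℝ) • (Pmat a b).map C + (Smat xc yc zc r).map C)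

/-- The point (x,y,z) lies on the elliptic paraboloid x²/a² + y²/b² - z = 0. -/
def onParaboloid (a b x y z : ℝ) : Prop := x^2/a^2 + y^2/b^2 - z = 0

/-- The point (x,y,z) lies on the sphere of radius r centered at (x_c,y_c,z_c). -/
def onSphere (xc yc zc r x y z : ℝ) : Prop :=
  (x - xc)^2 + (y - yc)^2 + (z - zc)^2 = r^2

/-- The sphere and the paraboloid are tangent at the point (x,y,z):
with X = (x,y,z,1)ᵗ one has XᵗPX = 0, XᵗSX = 0 and for every Y,
YᵗPX = 0 iff YᵗSX = 0 (same tangent plane). -/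
def TangentAt (a b xc yc zc r x y z : ℝ) : Prop :=
  ![x, y, z, 1] ⬝ᵥ (Pmat a b).mulVec ![x, y, z, 1] = 0 ∧
  ![x, y, z, 1] ⬝ᵥ (Smat xc yc zc r).mulVec ![x, y, z, 1] = 0 ∧
  ∀ Y : Fin 4 → ℝ,
    Y ⬝ᵥ (Pmat a b).mulVec ![x, y, z, 1] = 0 ↔
    Y ⬝ᵥ (Smat xc yc zc r).mulVec ![x, y, z, 1] = 0

lemma dotP (a b x y z : ℝ) (Y : Fin 4 → ℝ) :
    Y ⬝ᵥ (Pmat a b).mulVec ![x, y, z, 1]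
      = Y 0 * (x/a^2) + Y 1 * (y/b^2) + Y 2 * (-(1/2)) + Y 3 * (-(z/2)) := by
  simp [Pmat, Matrix.mulVec, dotProduct, Fin.sum_univ_four, Matrix.vecHead,
    Matrix.vecTail]
  ring

lemma dotS (zc r x y z : ℝ) (Y : Fin 4 → ℝ) :
    Y ⬝ᵥ (Smat 0 0 zc r).mulVec ![x, y, z, 1]
      = Y 0 * x + Y 1 * y + Y 2 * (z - zc) + Y 3 * (-zc*z + zc^2 - r^2) := by
  simp [Smat, Matrix.mulVec, dotProduct, Fin.sum_univ_four, Matrix.vecHead,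
    Matrix.vecTail]
  ring

lemma charPoly_eval (a b zc r : ℝ) (w : ℂ) :
    ((charPoly a b 0 0 zc r).map (algebraMap ℝ ℂ)).eval w =
      (w/(a:ℂ)^2 + 1) * ((w/(b:ℂ)^2 + 1) * (-(w^2/4) - (zc:ℂ)*w - (r:ℂ)^2)) := by
  rw [eval_map, charPoly]
  have h := RingHom.map_det (eval₂RingHom (algebraMap ℝ ℂ) w)
      ((X : Polynomial ℝ) • (Pmat a b).map C + (Smat 0 0 zc r).map C)
  simp only [RingHom.mapMatrix_apply, coe_eval₂RingHom] at h
  rw [h]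
  have hM : (((X : Polynomial ℝ) • (Pmat a b).map C + (Smat 0 0 zc r).map C).map
      (eval₂ (algebraMap ℝ ℂ) w)) =
      !![w/(a:ℂ)^2 + 1, 0, 0, 0;
         0, w/(b:ℂ)^2 + 1, 0, 0;
         0, 0, 1, -(w/2) - (zc:ℂ);
         0, 0, -(w/2) - (zc:ℂ), (zc:ℂ)^2 - (r:ℂ)^2] := by
    ext i j
    fin_cases i <;> fin_cases j <;>
      simp [Pmat, Smat, Matrix.map_apply, Matrix.vecHead, Matrix.vecTail, div_eq_mul_inv] <;>
      ring
  rw [hM]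
  simp [Matrix.det_succ_row_zero, Fin.sum_univ_succ, Matrix.vecHead, Matrix.vecTail]
  left; left; ring

lemma conj_root_aux (p : Polynomial ℝ) (w : ℂ)
    (h : (p.map (algebraMap ℝ ℂ)).IsRoot w) :
    (p.map (algebraMap ℝ ℂ)).IsRoot ((starRingEnd ℂ) w) := by
  have hcomp : (starRingEnd ℂ).comp (algebraMap ℝ ℂ) = algebraMap ℝ ℂ := by
    ext x; simp
  have key : (p.map (algebraMap ℝ ℂ)).eval ((starRingEnd ℂ) w)
      = (starRingEnd ℂ) ((p.map (algebraMap ℝ ℂ)).eval w) := by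
    rw [eval_map, eval_map, Polynomial.hom_eval₂, hcomp]
  have h' : (p.map (algebraMap ℝ ℂ)).eval w = 0 := h
  unfold Polynomial.IsRoot
  rw [key, h', map_zero]

set_option maxHeartbeats 1000000 in
/-- for a < b, center on the OZ-axis and smallness condition:
non-tangent contact ⟺ z_c² < r² ⟺ f has a non-real complex root; and the
non-real roots come in conjugate pairs. -/
theorem nontangent_contact_center_on_axis (a b r zc : ℝ)
    (ha : 0 < a) (hab : a < b) (hr : 0 < r) (hsmall : 2*r ≤ a^2) :
    ((∃ x y z : ℝ, onSphere 0 0 zc r x y z ∧ onParaboloid a b x y z ∧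
        ¬ TangentAt a b 0 0 zc r x y z) ↔ zc^2 < r^2) ∧
    (zc^2 < r^2 ↔ ∃ w : ℂ, w.im ≠ 0 ∧
        ((charPoly a b 0 0 zc r).map (algebraMap ℝ ℂ)).IsRoot w) ∧
    (∀ w : ℂ, ((charPoly a b 0 0 zc r).map (algebraMap ℝ ℂ)).IsRoot w → w.im ≠ 0 →
        ((charPoly a b 0 0 zc r).map (algebraMap ℝ ℂ)).IsRoot ((starRingEnd ℂ) w)) := by
  have ha' : a ≠ 0 := ha.ne'
  have hb0 : (0:ℝ) < b := ha.trans hab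
  have hb' : b ≠ 0 := hb0.ne'
  have hba : a^2 < b^2 := by nlinarith
  refine ⟨?_, ?_, fun w hw _ => conj_root_aux _ w hw⟩
  · -- Part A
    constructor
    · rintro ⟨x, y, z, hs, hp, hnt⟩
      by_contra hge
      push_neg at hge
      unfold onSphere at hs
      unfold onParaboloid at hp
      have hp' : x^2*b^2 + y^2*a^2 = z*(a^2*b^2) := by
        field_simp at hp; linarith
      have hz0 : 0 ≤ z := by
        have h1 : (0:ℝ) ≤ x^2/a^2 + y^2/b^2 := by positivity
        linarith
      have heq : z*(a^2*b^2) + (z-zc)^2*b^2 + y^2*(b^2-a^2) = r^2*b^2 := by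
        linear_combination b^2*hs - hp'
      rcases le_or_gt (2*zc) (a^2) with h1 | h2
      · -- small center: only tangential contact at the origin is possible
        have hzle : z ≤ 0 := by
          by_contra hc
          push_neg at hc
          nlinarith [mul_pos (mul_pos hc hc) (pow_pos hb0 2),
            mul_nonneg (mul_nonneg (sub_nonneg.mpr h1) hc.le) (pow_pos hb0 2).le,
            mul_nonneg (sq_nonneg y) (sub_pos.mpr hba).le,
            mul_le_mul_of_nonneg_right hge (sq_nonneg b)]
        have hz : z = 0 := le_antisymm hzle hz0
        subst hz
        have hy2 : y^2 ≤ 0 := by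
          by_contra hc
          push_neg at hc
          nlinarith [mul_pos hc (sub_pos.mpr hba),
            mul_le_mul_of_nonneg_right hge (sq_nonneg b)]
        have hy : y = 0 := pow_eq_zero_iff two_ne_zero |>.mp (le_antisymm hy2 (sq_nonneg y))
        subst hy
        have hx : x = 0 := by
          have hx2 : x^2 * b^2 = 0 := by linarith
          have := (mul_eq_zero.mp hx2).resolve_right (pow_ne_zero 2 hb')
          exact pow_eq_zero_iff two_ne_zero |>.mp this
        subst hx
        have hzr : zc^2 = r^2 := by linear_combination hs
        have hzc : zc ≠ 0 := by
          intro h; rw [h] at hzr; nlinarith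
        apply hnt
        refine ⟨?_, ?_, ?_⟩
        · rw [dotP]; norm_num [Matrix.cons_val_two, Matrix.cons_val_three, Matrix.tail_cons, Matrix.head_cons]
        · rw [dotS]; norm_num [Matrix.cons_val_two, Matrix.cons_val_three, Matrix.tail_cons, Matrix.head_cons]; linarith
        · intro Y
          rw [dotP, dotS]
          norm_num
          constructor
          · intro h
            linear_combination (-zc) * h + Y 3 * hzr
          · intro h
            have hz2 : Y 2 * zc = 0 := by linear_combination -h + Y 3 * hzr
            exact (mul_eq_zero.mp hz2).resolve_right hzc
      · -- center too high: no intersection point exists at all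
        exfalso
        have t2 : 4*r^2 ≤ a^4 := by nlinarith
        have t3 : a^2*a^2 < a^2*(2*zc) := mul_lt_mul_of_pos_left h2 (pow_pos ha 2)
        have t5 : 0 < (4*a^2*zc - a^4 - 4*r^2) * b^2 :=
          mul_pos (by nlinarith) (pow_pos hb0 2)
        nlinarith [mul_nonneg (sq_nonneg (2*z + a^2 - 2*zc)) (sq_nonneg b),
          mul_nonneg (sq_nonneg y) (sub_pos.mpr hba).le, t5, heq]
    · intro hlt
      -- construct an intersection point in the plane y = 0
      have hDpos : 0 < a^4 - 4*a^2*zc + 4*r^2 := by nlinarith [sq_nonneg (a^2 - 2*zc)]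
      set s := Real.sqrt (a^4 - 4*a^2*zc + 4*r^2) with hsdef
      have hs2 : s^2 = a^4 - 4*a^2*zc + 4*r^2 := Real.sq_sqrt hDpos.le
      have hs0 : 0 ≤ s := Real.sqrt_nonneg _
      set z₀ := (2*zc - a^2 + s)/2 with hz₀
      have hz₀pos : 0 < z₀ := by
        have h1 : (a^2 - 2*zc) < s := by nlinarith
        rw [hz₀]; linarith
      set x₀ := a * Real.sqrt z₀ with hx₀
      have hx₀2 : x₀^2 = a^2 * z₀ := by
        rw [hx₀, mul_pow, Real.sq_sqrt hz₀pos.le]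
      have hquad : z₀^2 + (a^2 - 2*zc)*z₀ + (zc^2 - r^2) = 0 := by
        rw [hz₀]; linear_combination hs2/4
      refine ⟨x₀, 0, z₀, ?_, ?_, ?_⟩
      · unfold onSphere
        linear_combination hx₀2 + hquad
      · unfold onParaboloid
        rw [hx₀2]; field_simp; ring
      · rintro ⟨-, -, hY⟩
        have h0 := hY ![(0:ℝ), 0, z₀/2, -(1/2)]
        rw [dotP, dotS] at h0
        simp only [Matrix.cons_val_zero, Matrix.cons_val_one, Matrix.head_cons,
          Matrix.cons_val_two, Matrix.tail_cons, Matrix.cons_val_three,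
          Matrix.head_fin_const] at h0
        have h2 := h0.mp (by ring)
        nlinarith [h2, sq_nonneg z₀]
  · -- Part B
    constructor
    · intro hlt
      set s := Real.sqrt (r^2 - zc^2) with hsdef
      have hs2 : s^2 = r^2 - zc^2 := Real.sq_sqrt (by linarith)
      have hspos : 0 < s := Real.sqrt_pos.mpr (by linarith)
      set w : ℂ := ((-2*zc : ℝ) : ℂ) + ((2*s : ℝ) : ℂ) * Complex.I with hw
      refine ⟨w, ?_, ?_⟩
      · have him : w.im = 2*s := by
          rw [hw]; simp
        rw [him]
        positivity
      · have key : -(w^2/4) - (zc:ℂ)*w - (r:ℂ)^2 = 0 := by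
          rw [hw]
          have hs2' : (s:ℂ)^2 = (r:ℂ)^2 - (zc:ℂ)^2 := by
            exact_mod_cast hs2
          push_cast
          linear_combination (-(s:ℂ)^2) * Complex.I_sq + hs2'
        unfold Polynomial.IsRoot
        rw [charPoly_eval, key, mul_zero, mul_zero]
    · rintro ⟨w, him, hroot⟩
      have hroot' : ((charPoly a b 0 0 zc r).map (algebraMap ℝ ℂ)).eval w = 0 := hroot
      rw [charPoly_eval] at hroot'
      have ha2 : ((a:ℂ))^2 ≠ 0 := by
        simpa using ha'
      have hb2 : ((b:ℂ))^2 ≠ 0 := by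
        simpa using hb'
      rcases mul_eq_zero.mp hroot' with h | h
      · exfalso
        apply him
        have hw : w = -((a:ℂ)^2) := by
          rw [div_add_one ha2, div_eq_zero_iff] at h
          linear_combination (h.resolve_right ha2)
        rw [hw]
        simp [pow_two]
      rcases mul_eq_zero.mp h with h | h
      · exfalso
        apply him
        have hw : w = -((b:ℂ)^2) := by
          rw [div_add_one hb2, div_eq_zero_iff] at h
          linear_combination (h.resolve_right hb2)
        rw [hw]
        simp [pow_two]
      · have hq : w^2 + 4*(zc:ℂ)*w + 4*(r:ℂ)^2 = 0 := by
          linear_combination (-4:ℂ) * h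
        have hre := congrArg Complex.re hq
        have him' := congrArg Complex.im hq
        simp [Complex.add_re, Complex.add_im, Complex.mul_re, Complex.mul_im, pow_two] at hre him'
        have hu : w.re = -2*zc := by
          have hm : w.im * (w.re + 2*zc) = 0 := by linear_combination him'/2
          have := (mul_eq_zero.mp hm).resolve_left him
          linarith
        have hv : w.im^2 = 4*(r^2 - zc^2) := by
          nlinarith [hre, hu]
        nlinarith [hv, pow_pos (abs_pos.mpr him) 2, sq_abs w.im]
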